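/- Let S be a compact Hausdorff space. Suppose 𝒟 ⊆ K(S) satisfies condition (1): C ∈ 𝒟 whenever C' ∈ 𝒟 for every compact neighborhood C' of C, and 𝒟 is upward closed. Then 𝒟 satisfies condition (2): for every C ∉ 𝒟 there exists a compact C̃ with C̃ ∩ C = ∅ and C̃ ∈ ∼𝒟, where ∼𝒟 = {C̃ : C̃ ∩ D ≠ ∅ for all D ∈ 𝒟}. Conversely, (2) together with the trivial inclusions implies (1). -/
import Mathlib


open Set

theorem stmt18 {S : Type*} [TopologicalSpace S] [CompactSpace S] [T2Space S]
    (D : Set (Set S)) (hD : ∀ C ∈ D, IsCompact C)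
    (hup : ∀ C ∈ D, ∀ C' : Set S, IsCompact C' → C ⊆ C' → C' ∈ D) :
    (∀ C : Set S, IsCompact C →
        (∀ C' : Set S, IsCompact C' → (∃ O, IsOpen O ∧ C ⊆ O ∧ O ⊆ C') → C' ∈ D) → C ∈ D)
      ↔
    (∀ C : Set S, IsCompact C → C ∉ D →
        ∃ Ct : Set S, IsCompact Ct ∧ Ct ∩ C = ∅ ∧ ∀ E ∈ D, (Ct ∩ E).Nonempty) := by
  constructor
  · intro h1 C hC hCD
    by_contra hcon
    push_neg at hcon
    apply hCD
    apply h1 C hC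
    intro C' hC' ⟨O, hO, hCO, hOC'⟩
    by_contra hC'D
    -- take Ct = Oᶜ
    have hCt : IsCompact (Oᶜ : Set S) := hO.isClosed_compl.isCompact
    have hdisj : (Oᶜ : Set S) ∩ C = ∅ := by
      apply eq_empty_iff_forall_notMem.2
      intro x ⟨hx1, hx2⟩
      exact hx1 (hCO hx2)
    obtain ⟨E, hE, hEmpty⟩ := hcon Oᶜ hCt hdisj
    have hEO : E ⊆ O := by
      intro x hx
      by_contra hxO
      exact absurd hEmpty (Set.nonempty_iff_ne_empty.1 ⟨x, hxO, hx⟩)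
    exact hC'D (hup E hE C' hC' (hEO.trans hOC'))
  · intro h2 C hC hnbhd
    by_contra hCD
    obtain ⟨Ct, hCt, hdisj, hmeet⟩ := h2 C hC hCD
    have hd : Disjoint Ct C := disjoint_iff_inter_eq_empty.2 hdisj
    obtain ⟨V, U, hV, hU, hCtV, hCU, hVU⟩ := SeparatedNhds.of_isCompact_isCompact hCt hC hd
    have hC' : IsCompact (Vᶜ : Set S) := hV.isClosed_compl.isCompact
    have hC'D : Vᶜ ∈ D := by
      apply hnbhd _ hC'
      exact ⟨U, hU, hCU, fun x hx hxV => hVU.le_bot ⟨hxV, hx⟩⟩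
    obtain ⟨x, hx1, hx2⟩ := hmeet _ hC'D
    exact hx2 (hCtV hx1)
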